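/- Let c be a real number with c > 1/4 and consider the quadratic polynomial P(z) = z² + c on ℂ. Then the filled Julia set K_P = {z ∈ ℂ : the forward orbit {P^{∘n}(z)}_{n≥0} is bounded} is totally disconnected. -/

import Mathlib

open Filter Topology

namespace FJTDaux

/-- Real auxiliary map. -/
noncomputable def g (c : ℝ) : ℝ → ℝ := fun x => x ^ 2 + c

lemma g_iter_ge {c : ℝ} (hc : 1 / 4 < c) (x : ℝ) :
    ∀ k : ℕ, x + k * (c - 1 / 4) ≤ (g c)^[k] x := by
  intro k
  induction k with
  | zero => simp
  | succ k ih =>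
    rw [Function.iterate_succ_apply']
    have h : (g c)^[k] x + (c - 1 / 4) ≤ g c ((g c)^[k] x) := by
      have := sq_nonneg ((g c)^[k] x - 1 / 2)
      simp only [g]
      nlinarith
    push_cast
    nlinarith

lemma iter_real (c : ℝ) (x : ℝ) : ∀ k : ℕ,
    (fun w : ℂ => w ^ 2 + (c : ℂ))^[k] (x : ℂ) = (((g c)^[k] x : ℝ) : ℂ) := by
  intro k
  induction k with
  | zero => simp
  | succ k ih =>
    rw [Function.iterate_succ_apply', Function.iterate_succ_apply', ih]
    simp only [g]
    push_cast
    ring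

lemma no_bounded_real_orbit {c : ℝ} (hc : 1 / 4 < c) (v : ℂ) (hv : v.im = 0) (M : ℝ)
    (hb : ∀ k : ℕ, ‖(fun w : ℂ => w ^ 2 + (c : ℂ))^[k] v‖ ≤ M) : False := by
  have hvr : v = ((v.re : ℝ) : ℂ) := by
    apply Complex.ext <;> simp [hv]
  have hc4 : (0 : ℝ) < c - 1 / 4 := by linarith
  obtain ⟨n, hn⟩ := exists_nat_gt ((M - v.re) / (c - 1 / 4))
  have h1 : M < v.re + n * (c - 1 / 4) := by
    rw [div_lt_iff₀ hc4] at hn; linarith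
  have h2 := g_iter_ge hc v.re n
  have h3 : (fun w : ℂ => w ^ 2 + (c : ℂ))^[n] v = (((g c)^[n] v.re : ℝ) : ℂ) := by
    conv_lhs => rw [hvr]
    exact iter_real c v.re n
  have h4 := hb n
  rw [h3] at h4
  have h5 : (g c)^[n] v.re ≤ M := by
    calc (g c)^[n] v.re ≤ |(g c)^[n] v.re| := le_abs_self _
    _ = ‖(((g c)^[n] v.re : ℝ) : ℂ)‖ := by
        rw [Complex.norm_real]; rfl
    _ ≤ M := h4
  linarith

lemma im_ne_zero {c : ℝ} (hc : 1 / 4 < c) {u : ℂ}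
    (hu : Bornology.IsBounded
      (Set.range fun n : ℕ => (fun w : ℂ => w ^ 2 + (c : ℂ))^[n] u)) (n : ℕ) :
    ((fun w : ℂ => w ^ 2 + (c : ℂ))^[n] u).im ≠ 0 := by
  intro h0
  obtain ⟨M, hM⟩ := hu.exists_norm_le
  refine no_bounded_real_orbit hc _ h0 M (fun k => ?_)
  rw [← Function.iterate_add_apply]
  exact hM _ ⟨k + n, rfl⟩

lemma re_ne_zero {c : ℝ} (hc : 1 / 4 < c) {u : ℂ}
    (hu : Bornology.IsBounded
      (Set.range fun n : ℕ => (fun w : ℂ => w ^ 2 + (c : ℂ))^[n] u)) (n : ℕ) :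
    ((fun w : ℂ => w ^ 2 + (c : ℂ))^[n] u).re ≠ 0 := by
  intro h0
  apply im_ne_zero hc hu (n + 1)
  rw [Function.iterate_succ_apply']
  set v := (fun w : ℂ => w ^ 2 + (c : ℂ))^[n] u with hv
  have he : (v ^ 2 + (c : ℂ)).im = 2 * (v.re * v.im) := by
    rw [Complex.add_im, Complex.ofReal_im, pow_two, Complex.mul_im]; ring
  rw [he, h0]; ring

/-- The key one-step expansion inequality for the conformal pseudo-metric
`|z-w|² / (|Im z|·|Im w|)`. -/
lemma step_ineq {δ R : ℝ} (hδ : 0 < δ) (hR : 0 < R) {a b : ℂ}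
    (h1 : 0 < a.re * b.re) (h2 : 0 < a.im * b.im)
    (hya : δ ≤ |a.im|) (hyb : δ ≤ |b.im|) (hxa : |a.re| ≤ R) (hxb : |b.re| ≤ R) :
    (1 + δ ^ 2 / R ^ 2) * Complex.normSq (a - b) * (|(a ^ 2).im| * |(b ^ 2).im|)
      ≤ Complex.normSq (a ^ 2 - b ^ 2) * (|a.im| * |b.im|) := by
  have hfac : a ^ 2 - b ^ 2 = (a - b) * (a + b) := by ring
  rw [hfac, Complex.normSq_mul]
  have hima : |(a ^ 2).im| = 2 * (|a.re| * |a.im|) := by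
    have : (a ^ 2).im = 2 * (a.re * a.im) := by
      rw [pow_two, Complex.mul_im]; ring
    rw [this, abs_mul, abs_mul, abs_two]
  have himb : |(b ^ 2).im| = 2 * (|b.re| * |b.im|) := by
    have : (b ^ 2).im = 2 * (b.re * b.im) := by
      rw [pow_two, Complex.mul_im]; ring
    rw [this, abs_mul, abs_mul, abs_two]
  rw [hima, himb]
  have hre_eq : |a.re| * |b.re| = a.re * b.re := by
    rw [← abs_mul, abs_of_pos h1]
  have him_eq : |a.im| * |b.im| = a.im * b.im := by
    rw [← abs_mul, abs_of_pos h2]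
  have hrr : a.re * b.re ≤ R ^ 2 := by
    calc a.re * b.re = |a.re| * |b.re| := hre_eq.symm
    _ ≤ R * R := mul_le_mul hxa hxb (abs_nonneg _) hR.le
    _ = R ^ 2 := (sq R).symm
  have hyy : δ ^ 2 ≤ a.im * b.im := by
    calc δ ^ 2 = δ * δ := sq δ
    _ ≤ |a.im| * |b.im| := mul_le_mul hya hyb hδ.le (abs_nonneg _)
    _ = a.im * b.im := him_eq
  -- key scalar inequality
  have key : (1 + δ ^ 2 / R ^ 2) * (4 * (a.re * b.re)) ≤ Complex.normSq (a + b) := by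
    have hdiv : δ ^ 2 / R ^ 2 * (4 * (a.re * b.re)) ≤ 4 * δ ^ 2 := by
      have h4 : δ ^ 2 / R ^ 2 * (4 * (a.re * b.re)) ≤ δ ^ 2 / R ^ 2 * (4 * R ^ 2) := by
        have : (0:ℝ) ≤ δ ^ 2 / R ^ 2 := by positivity
        nlinarith
      have h5 : δ ^ 2 / R ^ 2 * (4 * R ^ 2) = 4 * δ ^ 2 := by
        field_simp
      linarith
    have hnsq : Complex.normSq (a + b) = (a.re + b.re) ^ 2 + (a.im + b.im) ^ 2 := by
      rw [Complex.normSq_apply, Complex.add_re, Complex.add_im]; ring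
    rw [hnsq]
    nlinarith [sq_nonneg (a.re - b.re), sq_nonneg (a.im - b.im)]
  have hnn : (0:ℝ) ≤ Complex.normSq (a - b) * (|a.im| * |b.im|) :=
    mul_nonneg (Complex.normSq_nonneg _) (mul_nonneg (abs_nonneg _) (abs_nonneg _))
  calc (1 + δ ^ 2 / R ^ 2) * Complex.normSq (a - b) *
        (2 * (|a.re| * |a.im|) * (2 * (|b.re| * |b.im|)))
      = ((1 + δ ^ 2 / R ^ 2) * (4 * (a.re * b.re))) *
        (Complex.normSq (a - b) * (|a.im| * |b.im|)) := by
        rw [← hre_eq]; ring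
    _ ≤ Complex.normSq (a + b) * (Complex.normSq (a - b) * (|a.im| * |b.im|)) :=
        mul_le_mul_of_nonneg_right key hnn
    _ = Complex.normSq (a - b) * Complex.normSq (a + b) * (|a.im| * |b.im|) := by ring

end FJTDaux

/-- For real `c > 1/4`, the filled Julia set of `z ↦ z² + c` is
totally disconnected. -/
theorem filled_julia_totally_disconnected (c : ℝ) (hc : 1 / 4 < c) :
    IsTotallyDisconnected
      {z : ℂ |
        Bornology.IsBounded
          (Set.range fun n : ℕ => (fun w : ℂ => w ^ 2 + (c : ℂ))^[n] z)} := by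
  intro t hts ht z hz w hw
  by_contra hzw
  have hzK : Bornology.IsBounded
      (Set.range fun n : ℕ => (fun w : ℂ => w ^ 2 + (c : ℂ))^[n] z) := hts hz
  have hwK : Bornology.IsBounded
      (Set.range fun n : ℕ => (fun w : ℂ => w ^ 2 + (c : ℂ))^[n] w) := hts hw
  set F : ℂ → ℂ := fun w : ℂ => w ^ 2 + (c : ℂ) with hF
  have hFcont : Continuous F := by
    exact (continuous_pow 2).add continuous_const
  set S : Set ℂ :=
    closure ((Set.range fun n : ℕ => F^[n] z) ∪ (Set.range fun n : ℕ => F^[n] w)) with hS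
  have hSb' : Bornology.IsBounded
      ((Set.range fun n : ℕ => F^[n] z) ∪ (Set.range fun n : ℕ => F^[n] w)) :=
    hzK.union hwK
  have hSb : Bornology.IsBounded S := hSb'.closure
  have hScpt : IsCompact S := hSb'.isCompact_closure
  have hmaps : Set.MapsTo F S S := by
    refine Set.MapsTo.closure ?_ hFcont
    rintro x (⟨n, rfl⟩ | ⟨n, rfl⟩)
    · exact Or.inl ⟨n + 1, Function.iterate_succ_apply' F n z⟩
    · exact Or.inr ⟨n + 1, Function.iterate_succ_apply' F n w⟩
  obtain ⟨M, hM⟩ := hSb.exists_norm_le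
  have hS_im : ∀ v ∈ S, v.im ≠ 0 := by
    intro v hv h0
    refine FJTDaux.no_bounded_real_orbit hc v h0 M (fun k => ?_)
    exact hM _ ((hmaps.iterate k) hv)
  have hAS : ∀ n : ℕ, F^[n] z ∈ S := fun n => subset_closure (Or.inl ⟨n, rfl⟩)
  have hBS : ∀ n : ℕ, F^[n] w ∈ S := fun n => subset_closure (Or.inr ⟨n, rfl⟩)
  have hSne : S.Nonempty := ⟨z, by simpa using hAS 0⟩
  obtain ⟨v₀, hv₀S, hv₀min'⟩ :=
    hScpt.exists_isMinOn hSne (Complex.continuous_im.abs.continuousOn)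
  have hv₀min : ∀ y ∈ S, |v₀.im| ≤ |y.im| := fun y hy => hv₀min' hy
  set δ : ℝ := |v₀.im| with hδ
  have hδpos : 0 < δ := abs_pos.mpr (hS_im v₀ hv₀S)
  set R : ℝ := max M 1 with hR
  have hRpos : (0:ℝ) < R := lt_of_lt_of_le one_pos (le_max_right _ _)
  have hnormR : ∀ v ∈ S, ‖v‖ ≤ R := fun v hv => (hM v hv).trans (le_max_left _ _)
  -- sign agreement along the orbits
  have hcontn : ∀ n : ℕ, Continuous fun u : ℂ => F^[n] u := fun n => hFcont.iterate n
  have him_ne : ∀ u ∈ t, ∀ n : ℕ, (F^[n] u).im ≠ 0 := fun u hu n =>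
    FJTDaux.im_ne_zero hc (hts hu) n
  have hre_ne : ∀ u ∈ t, ∀ n : ℕ, (F^[n] u).re ≠ 0 := fun u hu n =>
    FJTDaux.re_ne_zero hc (hts hu) n
  have hsign : ∀ (φ : ℂ → ℝ), Continuous φ → (∀ u ∈ t, ∀ n : ℕ, φ (F^[n] u) ≠ 0) →
      ∀ n : ℕ, 0 < φ (F^[n] z) * φ (F^[n] w) := by
    intro φ hφ hne n
    rcases lt_trichotomy (φ (F^[n] z) * φ (F^[n] w)) 0 with hlt | heq | hgt
    · exfalso
      have hzne := hne z hz n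
      have hwne := hne w hw n
      have hcont : ContinuousOn (fun u : ℂ => φ (F^[n] u)) t :=
        (hφ.comp (hcontn n)).continuousOn
      rcases mul_neg_iff.mp hlt with ⟨hp, hq⟩ | ⟨hp, hq⟩
      · obtain ⟨x, hx, hx0⟩ := ht.intermediate_value₂ hw hz hcont continuousOn_const
          hq.le hp.le
        exact hne x hx n hx0
      · obtain ⟨x, hx, hx0⟩ := ht.intermediate_value₂ hz hw hcont continuousOn_const
          hp.le hq.le
        exact hne x hx n hx0
    · exact absurd (mul_eq_zero.mp heq) (by push_neg; exact ⟨hne z hz n, hne w hw n⟩)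
    · exact hgt
  have hsign_im : ∀ n : ℕ, 0 < (F^[n] z).im * (F^[n] w).im :=
    hsign (fun v => v.im) Complex.continuous_im him_ne
  have hsign_re : ∀ n : ℕ, 0 < (F^[n] z).re * (F^[n] w).re :=
    hsign (fun v => v.re) Complex.continuous_re hre_ne
  -- bounds along orbits
  have hyz : ∀ n : ℕ, δ ≤ |(F^[n] z).im| := fun n => hv₀min _ (hAS n)
  have hyw : ∀ n : ℕ, δ ≤ |(F^[n] w).im| := fun n => hv₀min _ (hBS n)
  have hxz : ∀ n : ℕ, |(F^[n] z).re| ≤ R := fun n =>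
    (Complex.abs_re_le_norm _).trans (by exact hnormR _ (hAS n))
  have hxw : ∀ n : ℕ, |(F^[n] w).re| ≤ R := fun n =>
    (Complex.abs_re_le_norm _).trans (by exact hnormR _ (hBS n))
  -- the pseudo-metric quantity
  set q : ℕ → ℝ := fun n =>
    Complex.normSq (F^[n] z - F^[n] w) / (|(F^[n] z).im| * |(F^[n] w).im|) with hq
  have hden_pos : ∀ n : ℕ, 0 < |(F^[n] z).im| * |(F^[n] w).im| := fun n =>
    mul_pos (lt_of_lt_of_le hδpos (hyz n)) (lt_of_lt_of_le hδpos (hyw n))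
  set K : ℝ := 1 + δ ^ 2 / R ^ 2 with hK
  have hK1 : 1 < K := by
    have : (0:ℝ) < δ ^ 2 / R ^ 2 := div_pos (pow_pos hδpos 2) (pow_pos hRpos 2)
    simp only [hK]; linarith
  have hstep : ∀ n : ℕ, K * q n ≤ q (n + 1) := by
    intro n
    have h := FJTDaux.step_ineq hδpos hRpos (hsign_re n) (hsign_im n)
      (hyz n) (hyw n) (hxz n) (hxw n)
    have hA : F^[n + 1] z = (F^[n] z) ^ 2 + (c : ℂ) := Function.iterate_succ_apply' F n z
    have hB : F^[n + 1] w = (F^[n] w) ^ 2 + (c : ℂ) := Function.iterate_succ_apply' F n w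
    have e1 : F^[n + 1] z - F^[n + 1] w = (F^[n] z) ^ 2 - (F^[n] w) ^ 2 := by
      rw [hA, hB]; ring
    have e2 : (F^[n + 1] z).im = ((F^[n] z) ^ 2).im := by
      rw [hA]; simp
    have e3 : (F^[n + 1] w).im = ((F^[n] w) ^ 2).im := by
      rw [hB]; simp
    have hd1 : 0 < |((F^[n] z) ^ 2).im| * |((F^[n] w) ^ 2).im| := by
      rw [← e2, ← e3]; exact hden_pos (n + 1)
    simp only [hq, e1, e2, e3]
    rw [← mul_div_assoc, div_le_div_iff₀ (hden_pos n) hd1]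
    calc K * Complex.normSq (F^[n] z - F^[n] w) * (|((F^[n] z) ^ 2).im| * |((F^[n] w) ^ 2).im|)
        = (1 + δ ^ 2 / R ^ 2) * Complex.normSq (F^[n] z - F^[n] w) *
          (|((F^[n] z) ^ 2).im| * |((F^[n] w) ^ 2).im|) := by rw [hK]
      _ ≤ Complex.normSq ((F^[n] z) ^ 2 - (F^[n] w) ^ 2) *
          (|(F^[n] z).im| * |(F^[n] w).im|) := h
  have hK0 : (0:ℝ) ≤ K := by linarith
  have hgrow : ∀ n : ℕ, K ^ n * q 0 ≤ q n := by
    intro n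
    induction n with
    | zero => simp
    | succ n ih =>
      calc K ^ (n + 1) * q 0 = K * (K ^ n * q 0) := by ring
        _ ≤ K * q n := mul_le_mul_of_nonneg_left ih hK0
        _ ≤ q (n + 1) := hstep n
  have hub : ∀ n : ℕ, q n ≤ (2 * R) ^ 2 / (δ * δ) := by
    intro n
    have hnum : Complex.normSq (F^[n] z - F^[n] w) ≤ (2 * R) ^ 2 := by
      have h1 : ‖F^[n] z - F^[n] w‖ ≤ 2 * R := by
        calc ‖F^[n] z - F^[n] w‖ ≤ ‖F^[n] z‖ + ‖F^[n] w‖ := norm_sub_le _ _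
          _ ≤ R + R := add_le_add (hnormR _ (hAS n)) (hnormR _ (hBS n))
          _ = 2 * R := by ring
      calc Complex.normSq (F^[n] z - F^[n] w)
          = ‖F^[n] z - F^[n] w‖ ^ 2 := by
            rw [Complex.normSq_eq_norm_sq]
        _ ≤ (2 * R) ^ 2 := pow_le_pow_left₀ (norm_nonneg _) h1 2
    have hden : δ * δ ≤ |(F^[n] z).im| * |(F^[n] w).im| :=
      mul_le_mul (hyz n) (hyw n) hδpos.le (abs_nonneg _)
    exact div_le_div₀ (by positivity) hnum (mul_pos hδpos hδpos) hden
  have hq0pos : 0 < q 0 := by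
    have hzw' : z - w ≠ 0 := sub_ne_zero.mpr hzw
    have : F^[0] z - F^[0] w = z - w := by simp
    simp only [hq]
    apply div_pos _ (hden_pos 0)
    rw [this]
    exact Complex.normSq_pos.mpr hzw'
  obtain ⟨n, hn⟩ := pow_unbounded_of_one_lt ((2 * R) ^ 2 / (δ * δ) / q 0) hK1
  have h1 : (2 * R) ^ 2 / (δ * δ) < K ^ n * q 0 := by
    rw [div_lt_iff₀ hq0pos] at hn
    linarith
  linarith [hgrow n, hub n]
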